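/- Let K be a field of characteristic 0, n ≥ 1, and R = K[[x₁,…,xₙ]] the formal power series ring. Let D be a K-derivation of R such that for every nonzero f ∈ R one has ord(D f − ∂f/∂x₁) ≥ ord(f) (i.e. the lowest homogeneous component of D, as a graded operator, is ∂/∂x₁). Then for every nonzero g ∈ ker D, the lowest homogeneous component of g contains no variable x₁, i.e. it lies in the subring K[[x₂,…,xₙ]]. -/

import Mathlib

/-- The total degree of a monomial exponent. -/
def tdeg {n : ℕ} (d : Fin n →₀ ℕ) : ℕ := d.sum fun _ e => e

/-- The formal partial derivative `∂/∂xᵢ` on `K[[x₁,…,xₙ]]`, acting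
coefficientwise. -/
noncomputable def formalPDeriv {K : Type*} [Field K] {n : ℕ} (i : Fin n)
    (f : MvPowerSeries (Fin n) K) : MvPowerSeries (Fin n) K :=
  fun d => ((d i + 1 : ℕ) : K) * MvPowerSeries.coeff (d + Finsupp.single i 1) f

/-- Let `D` be a derivation of `K[[x₁,…,xₙ]]` whose lowest homogeneous
component is `∂/∂x₁`, i.e. `ord(D f − ∂f/∂x₁) ≥ ord f` for all `f`.  Then the
lowest homogeneous component of any nonzero `g ∈ ker D` contains no variable
`x₁`: every monomial of `g` of minimal total degree which involves `x₁` has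
zero coefficient. -/
theorem stmt3 {K : Type*} [Field K] [CharZero K] (n : ℕ) (hn : 1 ≤ n)
    (D : Derivation K (MvPowerSeries (Fin n) K) (MvPowerSeries (Fin n) K))
    (hD : ∀ f : MvPowerSeries (Fin n) K, ∀ k : ℕ,
      (∀ d : Fin n →₀ ℕ, tdeg d < k → MvPowerSeries.coeff d f = 0) →
      (∀ d : Fin n →₀ ℕ, tdeg d < k →
        MvPowerSeries.coeff d (D f - formalPDeriv ⟨0, hn⟩ f) = 0)) :
    ∀ g : MvPowerSeries (Fin n) K, D g = 0 → g ≠ 0 →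
      ∀ d : Fin n →₀ ℕ,
        (∀ e : Fin n →₀ ℕ, tdeg e < tdeg d → MvPowerSeries.coeff e g = 0) →
        d ⟨0, hn⟩ ≠ 0 → MvPowerSeries.coeff d g = 0 := by
  intro g hDg hg0 d hlow hd0
  set i : Fin n := ⟨0, hn⟩
  set e : Fin n →₀ ℕ := d - Finsupp.single i 1 with he
  have hle : Finsupp.single i 1 ≤ d := by
    rw [Finsupp.single_le_iff]
    omega
  have hed : e + Finsupp.single i 1 = d := tsub_add_cancel_of_le hle
  have htdeg : tdeg e + 1 = tdeg d := by
    rw [← hed]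
    unfold tdeg
    rw [Finsupp.sum_add_index' (fun _ => rfl) (fun _ _ _ => rfl),
      Finsupp.sum_single_index rfl]
  have helt : tdeg e < tdeg d := by omega
  have := hD g (tdeg d) hlow e helt
  rw [hDg, map_sub, map_zero, zero_sub, neg_eq_zero] at this
  have hco : MvPowerSeries.coeff e (formalPDeriv i g)
      = ((e i + 1 : ℕ) : K) * MvPowerSeries.coeff d g := by
    show ((e i + 1 : ℕ) : K) * MvPowerSeries.coeff (e + Finsupp.single i 1) g = _
    rw [hed]
  rw [hco] at this
  have hne : ((e i + 1 : ℕ) : K) ≠ 0 := by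
    exact Nat.cast_ne_zero.mpr (Nat.succ_ne_zero _)
  exact (mul_eq_zero.mp this).resolve_left hne
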